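/- Let Λ be a maximal O-order in Mat_n(F) (O the ring of integers of a number field F), let Z ⊆ F^n be the O-module generated by the first columns of elements of Λ, and suppose Z has Steinitz form Z = O z₁ ⊕ … ⊕ O z_{n−1} ⊕ 𝔞 z_n with z_i ∈ F^n and 𝔞 an ideal of O. If S ∈ GL_n(F) is the matrix with columns z₁,…,z_n, then Λ = S Λ_{𝔞,n} S^{-1}. -/

import Mathlib

open scoped NumberField nonZeroDivisors

section

variable {F : Type*} [Field F] [NumberField F]

/-- The fractional ideal prescribing the `(i,j)` entry of the standard maximal order
`Λ_{𝔞,n}` in `Mat_n(F)`: entries are in `𝓞 F` except in the last column (in `𝔞⁻¹`) and the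
last row (in `𝔞`), with the `(n,n)` corner in `𝓞 F`. -/
noncomputable def entryIdeal (𝔞 : FractionalIdeal (𝓞 F)⁰ F) (n : ℕ) (i j : Fin n) :
    FractionalIdeal (𝓞 F)⁰ F :=
  if i.val = n - 1 then (if j.val = n - 1 then 1 else 𝔞) else (if j.val = n - 1 then 𝔞⁻¹ else 1)

/-- The standard ("nice form") maximal order `Λ_{𝔞,n}` in `Mat_n(F)`. -/
noncomputable def stdOrder (𝔞 : FractionalIdeal (𝓞 F)⁰ F) (n : ℕ) :
    Set (Matrix (Fin n) (Fin n) F) :=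
  {x | ∀ i j, x i j ∈ entryIdeal 𝔞 n i j}

/-- An `𝓞 F`-order of full rank in `Mat_n(F)`: a subring, stable under `𝓞 F`, finitely
generated as an `𝓞 F`-module, and spanning `Mat_n(F)` over `F`. -/
def IsOrderSet {n : ℕ} (S : Set (Matrix (Fin n) (Fin n) F)) : Prop :=
  (1 : Matrix (Fin n) (Fin n) F) ∈ S ∧
  (∀ x ∈ S, ∀ y ∈ S, x + y ∈ S) ∧ (∀ x ∈ S, -x ∈ S) ∧
  (∀ x ∈ S, ∀ y ∈ S, x * y ∈ S) ∧
  (∀ r : 𝓞 F, ∀ x ∈ S, r • x ∈ S) ∧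
  (∃ t : Finset (Matrix (Fin n) (Fin n) F), (t : Set (Matrix (Fin n) (Fin n) F)) ⊆ S ∧
    S ⊆ (Submodule.span (𝓞 F) (t : Set (Matrix (Fin n) (Fin n) F)) : Set (Matrix (Fin n) (Fin n) F))) ∧
  Submodule.span F S = ⊤

/-- A maximal `𝓞 F`-order in `Mat_n(F)`. -/
def IsMaximalOrderSet {n : ℕ} (S : Set (Matrix (Fin n) (Fin n) F)) : Prop :=
  IsOrderSet S ∧ ∀ S' : Set (Matrix (Fin n) (Fin n) F), IsOrderSet S' → S ⊆ S' → S' = S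

-- auxiliary lemmas

lemma fracIdeal_zero_mem (I : FractionalIdeal (𝓞 F)⁰ F) : (0 : F) ∈ I :=
  FractionalIdeal.mem_coe.mp (Submodule.zero_mem _)

lemma fracIdeal_smul_mem (I : FractionalIdeal (𝓞 F)⁰ F) (r : 𝓞 F) {x : F} (h : x ∈ I) :
    r • x ∈ I :=
  FractionalIdeal.mem_coe.mp (Submodule.smul_mem _ r (FractionalIdeal.mem_coe.mpr h))

lemma fracIdeal_sum_mem (I : FractionalIdeal (𝓞 F)⁰ F) {ι : Type*} (s : Finset ι)
    {f : ι → F} (h : ∀ i ∈ s, f i ∈ I) : ∑ i ∈ s, f i ∈ I :=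
  FractionalIdeal.mem_coe.mp (Submodule.sum_mem _ fun i hi => FractionalIdeal.mem_coe.mpr (h i hi))

/-- **Lemma 5.2.** Let `Λ` be a maximal order in `Mat_n(F)`, `Z` the `𝓞 F`-module generated
by the first columns of elements of `Λ`, with Steinitz form `Z = O z₁ ⊕ ⋯ ⊕ O z_{n-1} ⊕ 𝔞 z_n`.
If `S` is the (invertible) matrix with columns `z₁, …, z_n`, then `Λ = S Λ_{𝔞,n} S⁻¹`. -/
theorem maximalOrder_eq_conj_stdOrder (n : ℕ) (hn : 0 < n)
    (Λ : Set (Matrix (Fin n) (Fin n) F)) (hΛ : IsMaximalOrderSet Λ)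
    (z : Fin n → (Fin n → F)) (𝔞 : Ideal (𝓞 F)) (h𝔞 : 𝔞 ≠ ⊥)
    (S : Matrix (Fin n) (Fin n) F) (hS : S = Matrix.of fun i j => z j i) (hSu : IsUnit S.det)
    (hZ : ∀ v : Fin n → F,
      (v ∈ Submodule.span (𝓞 F) {w : Fin n → F | ∃ m ∈ Λ, w = fun i => m i ⟨0, hn⟩}) ↔
      ∃ c : Fin n → F,
        (∀ i : Fin n, c i ∈ (if i.val = n - 1 then (𝔞 : FractionalIdeal (𝓞 F)⁰ F) else 1)) ∧
        v = ∑ i, c i • z i) :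
    Λ = (fun x => S * x * S⁻¹) '' stdOrder (𝔞 : FractionalIdeal (𝓞 F)⁰ F) n := by
  classical
  obtain ⟨⟨h1, hadd, hneg, hmul, hsmul, hfg, hspan⟩, hmax⟩ := hΛ
  set A : FractionalIdeal (𝓞 F)⁰ F := (𝔞 : FractionalIdeal (𝓞 F)⁰ F) with hA
  have hA0 : A ≠ 0 := FractionalIdeal.coeIdeal_ne_zero.mpr h𝔞
  have hAinv : A * A⁻¹ = 1 := mul_inv_cancel₀ hA0
  set C : Fin n → FractionalIdeal (𝓞 F)⁰ F := fun i => if i.val = n - 1 then A else 1 with hC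
  set Z : Submodule (𝓞 F) (Fin n → F) :=
    Submodule.span (𝓞 F) {w : Fin n → F | ∃ m ∈ Λ, w = fun i => m i ⟨0, hn⟩} with hZdef
  have hinv1 : S⁻¹ * S = 1 := Matrix.nonsing_inv_mul S hSu
  have hinv2 : S * S⁻¹ = 1 := Matrix.mul_nonsing_inv S hSu
  -- sums vs mulVec
  have hsum : ∀ c : Fin n → F, (∑ i, c i • z i) = S.mulVec c := by
    intro c
    funext j
    simp only [hS, Matrix.mulVec, dotProduct, Matrix.of_apply, Finset.sum_apply,
      Pi.smul_apply, smul_eq_mul]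
    exact Finset.sum_congr rfl fun i _ => mul_comm _ _
  have hCeq : ∀ k : Fin n, k.val = n - 1 → C k = A := fun k hk => by simp [hC, hk]
  have hCne : ∀ k : Fin n, ¬(k.val = n - 1) → C k = 1 := fun k hk => by simp [hC, hk]
  have hZ' : ∀ v, v ∈ Z ↔ ∃ c, (∀ i, c i ∈ C i) ∧ v = S.mulVec c := by
    intro v
    rw [hZdef, hZ v]
    constructor
    · rintro ⟨c, hc, rfl⟩; exact ⟨c, hc, (hsum c)⟩
    · rintro ⟨c, hc, rfl⟩; exact ⟨c, hc, (hsum c).symm⟩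
  -- the stabilizer order
  set Λ2 : Set (Matrix (Fin n) (Fin n) F) := {x | ∀ v ∈ Z, x.mulVec v ∈ Z} with hΛ2def
  -- products of entry ideals land correctly
  have hEnt : ∀ i j : Fin n, entryIdeal A n i j * C j ≤ C i := by
    intro i j
    by_cases hi : i.val = n - 1 <;> by_cases hj : j.val = n - 1 <;>
      simp only [entryIdeal, hC, hi, hj, if_true, if_false, one_mul, mul_one, le_refl]
    · rw [mul_comm, hAinv]
  -- characterization of stdOrder by stability
  have hstd : ∀ y : Matrix (Fin n) (Fin n) F,
      y ∈ stdOrder A n ↔ ∀ c : Fin n → F, (∀ i, c i ∈ C i) → ∀ i, y.mulVec c i ∈ C i := by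
    intro y
    constructor
    · intro hy c hc i
      have : y.mulVec c i = ∑ j, y i j * c j := by
        simp [Matrix.mulVec, dotProduct]
      rw [this]
      exact fracIdeal_sum_mem _ _ fun j _ =>
        hEnt i j (FractionalIdeal.mul_mem_mul (hy i j) (hc j))
    · intro h i j
      by_cases hj : j.val = n - 1
      · -- last column
        have key : ∀ a ∈ A, y i j * a ∈ C i := by
          intro a ha
          have hc : ∀ k, (Pi.single j a : Fin n → F) k ∈ C k := by
            intro k
            by_cases hk : k = j
            · subst hk; rw [Pi.single_eq_same, hCeq k hj]; exact ha
            · rw [Pi.single_eq_of_ne hk]; exact fracIdeal_zero_mem _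
          have := h (Pi.single j a) hc i
          rwa [Matrix.mulVec_single] at this
        have hle : FractionalIdeal.spanSingleton (𝓞 F)⁰ (y i j) * A ≤ C i := by
          rw [FractionalIdeal.mul_le]
          intro s hs a ha
          obtain ⟨r, rfl⟩ := (FractionalIdeal.mem_spanSingleton _).mp hs
          rw [smul_mul_assoc]
          exact fracIdeal_smul_mem _ r (key a ha)
        have hle2 : FractionalIdeal.spanSingleton (𝓞 F)⁰ (y i j) ≤ C i * A⁻¹ := by
          calc FractionalIdeal.spanSingleton (𝓞 F)⁰ (y i j)
              = FractionalIdeal.spanSingleton (𝓞 F)⁰ (y i j) * (A * A⁻¹) := by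
                rw [hAinv, mul_one]
            _ = FractionalIdeal.spanSingleton (𝓞 F)⁰ (y i j) * A * A⁻¹ := (mul_assoc _ _ _).symm
            _ ≤ C i * A⁻¹ := mul_le_mul_left hle _
        have hmem : y i j ∈ C i * A⁻¹ :=
          FractionalIdeal.spanSingleton_le_iff_mem.mp hle2
        by_cases hi : i.val = n - 1
        · rw [hCeq i hi, hAinv] at hmem
          simpa only [entryIdeal, hi, hj, if_true] using hmem
        · rw [hCne i hi, one_mul] at hmem
          simpa only [entryIdeal, hi, hj, if_true, if_false] using hmem
      · -- not the last column
        have hc : ∀ k, (Pi.single j (1:F) : Fin n → F) k ∈ C k := by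
          intro k
          by_cases hk : k = j
          · subst hk; rw [Pi.single_eq_same, hCne k hj]
            exact FractionalIdeal.one_mem_one _
          · rw [Pi.single_eq_of_ne hk]; exact fracIdeal_zero_mem _
        have := h (Pi.single j 1) hc i
        rw [Matrix.mulVec_single] at this
        by_cases hi : i.val = n - 1
        · simp only [entryIdeal, hi, hj, if_true, if_false]
          rw [hCeq i hi] at this; simpa using this
        · simp only [entryIdeal, hi, hj, if_false]
          rw [hCne i hi] at this; simpa using this
  -- characterization of Λ2
  have hchar : ∀ x : Matrix (Fin n) (Fin n) F, x ∈ Λ2 ↔ (S⁻¹ * x * S) ∈ stdOrder A n := by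
    intro x
    rw [hstd]
    constructor
    · intro h c hc
      have hv : S.mulVec c ∈ Z := (hZ' _).mpr ⟨c, hc, rfl⟩
      obtain ⟨c', hc', heq⟩ := (hZ' _).mp (h _ hv)
      have : (S⁻¹ * x * S).mulVec c = c' := by
        rw [← Matrix.mulVec_mulVec, ← Matrix.mulVec_mulVec, heq, Matrix.mulVec_mulVec,
          hinv1, Matrix.one_mulVec]
      rw [this]; exact hc'
    · intro h v hv
      obtain ⟨c, hc, rfl⟩ := (hZ' v).mp hv
      refine (hZ' _).mpr ⟨(S⁻¹ * x * S).mulVec c, h c hc, ?_⟩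
      rw [Matrix.mulVec_mulVec, Matrix.mulVec_mulVec, ← Matrix.mul_assoc,
        ← Matrix.mul_assoc, hinv2, Matrix.one_mul]
  have e2 : ∀ y : Matrix (Fin n) (Fin n) F, S * (S⁻¹ * y * S) * S⁻¹ = y := by
    intro y
    have h1 : S * (S⁻¹ * y * S) * S⁻¹ = (S * S⁻¹) * y * (S * S⁻¹) := by
      simp only [Matrix.mul_assoc]
    rw [h1, hinv2, Matrix.one_mul, Matrix.mul_one]
  have e1 : ∀ y : Matrix (Fin n) (Fin n) F, S⁻¹ * (S * y * S⁻¹) * S = y := by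
    intro y
    have h1 : S⁻¹ * (S * y * S⁻¹) * S = (S⁻¹ * S) * y * (S⁻¹ * S) := by
      simp only [Matrix.mul_assoc]
    rw [h1, hinv1, Matrix.one_mul, Matrix.mul_one]
  -- Λ ⊆ Λ2
  have hsub : Λ ⊆ Λ2 := by
    intro m hm v hv
    rw [hZdef] at hv ⊢
    induction hv using Submodule.span_induction with
    | mem w hw =>
      obtain ⟨lam, hlam, rfl⟩ := hw
      refine Submodule.subset_span ⟨m * lam, hmul m hm lam hlam, ?_⟩
      funext i
      simp [Matrix.mulVec, dotProduct, Matrix.mul_apply]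
    | zero => rw [Matrix.mulVec_zero]; exact Submodule.zero_mem _
    | add x y hx hy ihx ihy => rw [Matrix.mulVec_add]; exact Submodule.add_mem _ ihx ihy
    | smul r x hx ih => rw [Matrix.mulVec_smul]; exact Submodule.smul_mem _ r ih
  -- finite generation data for stdOrder
  have hfgij : ∀ p : Fin n × Fin n, ∃ T : Finset F,
      Submodule.span (𝓞 F) (T : Set F) = (entryIdeal A n p.1 p.2 : Submodule (𝓞 F) F) :=
    fun p => FractionalIdeal.fg_of_isNoetherianRing le_rfl (entryIdeal A n p.1 p.2)
  choose T hT using hfgij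
  set t0 : Finset (Matrix (Fin n) (Fin n) F) :=
    (Finset.univ : Finset (Fin n × Fin n)).biUnion
      (fun p => (T p).image (fun a => Matrix.single p.1 p.2 a)) with ht0
  have hTmem : ∀ p : Fin n × Fin n, ∀ a ∈ T p, a ∈ entryIdeal A n p.1 p.2 := by
    intro p a ha
    rw [← FractionalIdeal.mem_coe, ← hT p]
    exact Submodule.subset_span ha
  have hstdBasis_mem : ∀ (i j : Fin n) (a : F), a ∈ entryIdeal A n i j →
      Matrix.single i j a ∈ stdOrder A n := by
    intro i j a ha i' j'
    simp only [Matrix.single, Matrix.of_apply]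
    by_cases h : i = i' ∧ j = j'
    · obtain ⟨rfl, rfl⟩ := h; rw [if_pos ⟨rfl, rfl⟩]; exact ha
    · rw [if_neg h]; exact fracIdeal_zero_mem _
  have ht0sub : (t0 : Set (Matrix (Fin n) (Fin n) F)) ⊆ stdOrder A n := by
    intro x hx
    simp only [ht0, Finset.coe_biUnion, Finset.coe_univ, Set.mem_iUnion, Finset.coe_image,
      Set.mem_image, Finset.mem_coe] at hx
    obtain ⟨p, _, a, ha, rfl⟩ := hx
    exact hstdBasis_mem p.1 p.2 a (hTmem p a ha)
  -- stdOrder ⊆ span t0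
  have hstdspan : stdOrder A n ⊆
      (Submodule.span (𝓞 F) (t0 : Set (Matrix (Fin n) (Fin n) F)) :
        Set (Matrix (Fin n) (Fin n) F)) := by
    intro x hx
    have hx' : x = ∑ i : Fin n, ∑ j : Fin n, Matrix.single i j (x i j) :=
      Matrix.matrix_eq_sum_single x
    rw [hx']
    refine Submodule.sum_mem _ fun i _ => Submodule.sum_mem _ fun j _ => ?_
    -- the linear map a ↦ stdBasisMatrix i j a
    let L : F →ₗ[𝓞 F] Matrix (Fin n) (Fin n) F :=
      { toFun := fun a => Matrix.single i j a
        map_add' := fun a b => Matrix.single_add i j a b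
        map_smul' := by
          intro r a
          ext i' j'
          simp only [Matrix.single, Matrix.of_apply, RingHom.id_apply,
            Matrix.smul_apply, smul_ite, smul_zero] }
    have hxij : x i j ∈ Submodule.span (𝓞 F) ((T (i, j) : Set F)) := by
      rw [hT (i, j)]; exact FractionalIdeal.mem_coe.mpr (hx i j)
    have : L (x i j) ∈ Submodule.map L (Submodule.span (𝓞 F) ((T (i, j) : Set F))) :=
      Submodule.mem_map_of_mem hxij
    rw [Submodule.map_span] at this
    refine Submodule.span_mono ?_ this
    intro y hy
    obtain ⟨a, ha, rfl⟩ := hy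
    simp only [ht0, Finset.coe_biUnion, Finset.coe_univ, Set.mem_iUnion, Finset.coe_image,
      Set.mem_image, Finset.mem_coe]
    exact ⟨(i, j), Set.mem_univ _, a, ha, rfl⟩
  -- Λ2 equals the conjugate image of stdOrder
  have himage : Λ2 = (fun x => S * x * S⁻¹) '' stdOrder A n := by
    ext x
    constructor
    · intro hx
      exact ⟨S⁻¹ * x * S, (hchar x).mp hx, e2 x⟩
    · rintro ⟨y, hy, rfl⟩
      rw [hchar, e1]
      exact hy
  -- conjugation as an 𝓞 F-linear map
  let φ : Matrix (Fin n) (Fin n) F →ₗ[𝓞 F] Matrix (Fin n) (Fin n) F :=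
    { toFun := fun x => S * x * S⁻¹
      map_add' := fun x y => by
        rw [Matrix.mul_add, Matrix.add_mul]
      map_smul' := fun r x => by
        rw [Matrix.mul_smul, Matrix.smul_mul, RingHom.id_apply] }
  -- Λ2 is an order
  have hΛ2ord : IsOrderSet Λ2 := by
    refine ⟨?_, ?_, ?_, ?_, ?_, ?_, ?_⟩
    · intro v hv; rwa [Matrix.one_mulVec]
    · intro x hx y hy v hv; rw [Matrix.add_mulVec]; exact Submodule.add_mem _ (hx v hv) (hy v hv)
    · intro x hx v hv; rw [Matrix.neg_mulVec]; exact Submodule.neg_mem _ (hx v hv)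
    · intro x hx y hy v hv
      rw [← Matrix.mulVec_mulVec]
      exact hx _ (hy v hv)
    · intro r x hx v hv; rw [Matrix.smul_mulVec]; exact Submodule.smul_mem _ r (hx v hv)
    · refine ⟨t0.image (fun y => S * y * S⁻¹), ?_, ?_⟩
      · intro x hx
        simp only [Finset.coe_image, Set.mem_image, Finset.mem_coe] at hx
        obtain ⟨y, hy, rfl⟩ := hx
        rw [himage]
        exact ⟨y, ht0sub hy, rfl⟩
      · intro x hx
        rw [himage] at hx
        obtain ⟨y, hy, rfl⟩ := hx
        have h1 : y ∈ Submodule.span (𝓞 F) (t0 : Set (Matrix (Fin n) (Fin n) F)) := hstdspan hy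
        have h2 : φ y ∈ Submodule.map φ (Submodule.span (𝓞 F) (t0 : Set (Matrix (Fin n) (Fin n) F))) :=
          Submodule.mem_map_of_mem h1
        rw [Submodule.map_span] at h2
        have h3 : (⇑φ '' (t0 : Set (Matrix (Fin n) (Fin n) F))) =
            ((t0.image (fun y => S * y * S⁻¹) : Finset (Matrix (Fin n) (Fin n) F)) :
              Set (Matrix (Fin n) (Fin n) F)) := by
          rw [Finset.coe_image]; rfl
        rw [h3] at h2
        exact h2
    · apply top_unique
      rw [← hspan]
      exact Submodule.span_mono hsub
  have heq : Λ2 = Λ := hmax Λ2 hΛ2ord hsub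
  rw [← heq, himage]


end
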